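/- For the action of diag(Aff₀(ℝ) × Aff₀(ℝ)) on SL(2,ℝ) by conjugation g·x = g x g⁻¹ restricted to g ∈ Aff₀(ℝ): two points p, p' with p₂₁ ≠ 0 and p'₂₁ ≠ 0 lie in the same orbit if and only if p₂₁p'₂₁ > 0 and p₁₁ + p₂₂ = p'₁₁ + p'₂₂. -/

import Mathlib

open Matrix

noncomputable section

local notation "M2" => Matrix (Fin 2) (Fin 2) ℝ
local notation "SL2" => Matrix.SpecialLinearGroup (Fin 2) ℝ

/-- F_{t,s} = diag(eᵗ, e⁻ᵗ) + sE₁₂ -/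
def Fm (t s : ℝ) : M2 := !![Real.exp t, s; 0, Real.exp (-t)]

lemma Fm_inv (t s : ℝ) : (Fm t s)⁻¹ = !![Real.exp (-t), -s; 0, Real.exp t] := by
  apply Matrix.inv_eq_right_inv
  rw [Fm, Matrix.mul_fin_two]
  ext i j
  fin_cases i <;> fin_cases j <;>
    simp [Matrix.one_apply, ← Real.exp_add] <;> ring

lemma conj_eq (u v s : ℝ) (huv : u * v = 1) (A : M2) :
    !![u, s; 0, v] * A * !![v, -s; 0, u] =
      !![A 0 0 + s * v * A 1 0,
         -(s * u) * A 0 0 - s * s * A 1 0 + u * u * A 0 1 + s * u * A 1 1;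
         v * v * A 1 0, A 1 1 - s * v * A 1 0] := by
  rw [Matrix.eta_fin_two A, Matrix.mul_fin_two, Matrix.mul_fin_two]
  ext i j
  fin_cases i <;> fin_cases j <;> simp <;>
    first
      | linear_combination A 0 0 * huv
      | linear_combination A 1 1 * huv
      | ring

theorem diagAff_orbit_criterion (p p' : SL2)
    (h : (p : M2) 1 0 ≠ 0) (h' : (p' : M2) 1 0 ≠ 0) :
    (∃ t s : ℝ, Fm t s * (p : M2) * (Fm t s)⁻¹ = (p' : M2)) ↔
      0 < (p : M2) 1 0 * (p' : M2) 1 0 ∧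
      (p : M2) 0 0 + (p : M2) 1 1 = (p' : M2) 0 0 + (p' : M2) 1 1 := by
  have hdet : (p : M2) 0 0 * (p : M2) 1 1 - (p : M2) 0 1 * (p : M2) 1 0 = 1 := by
    have := p.2; rwa [Matrix.det_fin_two] at this
  have hdet' : (p' : M2) 0 0 * (p' : M2) 1 1 - (p' : M2) 0 1 * (p' : M2) 1 0 = 1 := by
    have := p'.2; rwa [Matrix.det_fin_two] at this
  constructor
  · rintro ⟨t, s, heq⟩
    have huv : Real.exp t * Real.exp (-t) = 1 := by rw [← Real.exp_add]; simp
    rw [Fm_inv, Fm, conj_eq _ _ _ huv] at heq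
    have h00 := congrFun (congrFun heq 0) 0
    have h10 := congrFun (congrFun heq 1) 0
    have h11 := congrFun (congrFun heq 1) 1
    simp only [Matrix.of_apply, Matrix.cons_val', Matrix.cons_val_zero,
      Matrix.cons_val_one, Matrix.head_cons, Matrix.empty_val',
      Matrix.cons_val_fin_one, Matrix.head_fin_const] at h00 h10 h11
    constructor
    · have hne : Real.exp (-t) * (p : M2) 1 0 ≠ 0 :=
        mul_ne_zero (Real.exp_ne_zero _) h
      have hsq : (p : M2) 1 0 * (p' : M2) 1 0 = (Real.exp (-t) * (p : M2) 1 0) ^ 2 := by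
        rw [← h10]; ring
      rw [hsq]
      positivity
    · linarith [h00, h11]
  · rintro ⟨hsgn, htr⟩
    have hcc : 0 < (p' : M2) 1 0 / (p : M2) 1 0 := by
      rcases lt_or_gt_of_ne h with hc | hc
      · have hc' : (p' : M2) 1 0 < 0 := by nlinarith
        exact div_pos_of_neg_of_neg hc' hc
      · have hc' : 0 < (p' : M2) 1 0 := by nlinarith
        exact div_pos hc' hc
    set v := Real.sqrt ((p' : M2) 1 0 / (p : M2) 1 0) with hv
    have hvpos : 0 < v := Real.sqrt_pos.mpr hcc
    have hv2 : v * v = (p' : M2) 1 0 / (p : M2) 1 0 := Real.mul_self_sqrt hcc.le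
    have h10e : v * v * (p : M2) 1 0 = (p' : M2) 1 0 := by
      rw [hv2, div_mul_cancel₀ _ h]
    have hvc : v * (p : M2) 1 0 ≠ 0 := mul_ne_zero hvpos.ne' h
    set s₀ := ((p' : M2) 0 0 - (p : M2) 0 0) / (v * (p : M2) 1 0) with hs₀
    refine ⟨-Real.log v, s₀, ?_⟩
    have he : Real.exp (-(-Real.log v)) = v := by rw [neg_neg, Real.exp_log hvpos]
    have he' : Real.exp (-Real.log v) = v⁻¹ := by
      rw [Real.exp_neg, Real.exp_log hvpos]
    have huv : v⁻¹ * v = 1 := inv_mul_cancel₀ hvpos.ne'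
    have hsv : s₀ * v * (p : M2) 1 0 = (p' : M2) 0 0 - (p : M2) 0 0 := by
      rw [hs₀]; field_simp
    have h00e : (p : M2) 0 0 + s₀ * v * (p : M2) 1 0 = (p' : M2) 0 0 := by
      linarith [hsv]
    have h11e : (p : M2) 1 1 - s₀ * v * (p : M2) 1 0 = (p' : M2) 1 1 := by
      linarith [hsv]
    have hdetX : (!![(v:ℝ)⁻¹, s₀; 0, v] * (p : M2) * !![v, -s₀; 0, v⁻¹]).det = 1 := by
      rw [Matrix.det_mul, Matrix.det_mul]
      have hp : ((p : M2)).det = 1 := p.2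
      rw [hp, Matrix.det_fin_two_of, Matrix.det_fin_two_of]
      field_simp
      simp
    rw [conj_eq _ _ _ huv, Matrix.det_fin_two_of, h00e, h11e, h10e] at hdetX
    have h01e : -(s₀ * v⁻¹) * (p : M2) 0 0 - s₀ * s₀ * (p : M2) 1 0
        + v⁻¹ * v⁻¹ * (p : M2) 0 1 + s₀ * v⁻¹ * (p : M2) 1 1 = (p' : M2) 0 1 :=
      mul_right_cancel₀ h' (by linarith [hdetX, hdet'])
    rw [Fm_inv, Fm, he, he', conj_eq _ _ _ huv, h00e, h01e, h10e, h11e]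
    exact (Matrix.eta_fin_two _).symm
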